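/- Let N be an odd unitary super perfect number with N ≠ 9 and N ≠ 165, and write σ*(N) = 2^{f₁} · q^{f₂} with q an odd prime, q ≠ 3, and f₁, f₂ positive integers. Then q ≤ 13; furthermore, if f₂ ≥ 2, then q = 5 or q = 7. -/

import Mathlib

/-- The sum of the unitary divisors of `n` (divisors `d` of `n` with `gcd(d, n/d) = 1`). -/
def usigma (n : ℕ) : ℕ := ∑ d ∈ n.divisors.filter (fun d => Nat.Coprime d (n / d)), d

lemma usigma_zero : usigma 0 = 0 := by simp [usigma]

lemma usigma_one : usigma 1 = 1 := by rfl

lemma usigma_prime_pow {p e : ℕ} (hp : p.Prime) (he : 0 < e) :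
    usigma (p ^ e) = p ^ e + 1 := by
  unfold usigma
  have hkey : (p ^ e).divisors.filter (fun d => Nat.Coprime d (p ^ e / d)) = {p ^ e, 1} := by
    ext d
    simp only [Finset.mem_filter, Nat.mem_divisors, Finset.mem_insert, Finset.mem_singleton]
    constructor
    · rintro ⟨⟨hd, hne⟩, hcop⟩
      obtain ⟨i, hi, rfl⟩ := (Nat.dvd_prime_pow hp).mp hd
      rcases eq_or_ne i 0 with rfl | h0
      · right; rfl
      rcases eq_or_ne i e with rfl | hie
      · left; rfl
      exfalso
      have hlt : i < e := lt_of_le_of_ne hi hie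
      have : p ∣ Nat.gcd (p ^ i) (p ^ e / p ^ i) := by
        rw [Nat.pow_div hlt.le hp.pos]
        exact Nat.dvd_gcd (dvd_pow_self p h0) (dvd_pow_self p (by omega))
      rw [hcop] at this
      exact hp.one_lt.ne' (Nat.eq_one_of_dvd_one this ▸ rfl)
    · rintro (rfl | rfl)
      · exact ⟨⟨dvd_rfl, (pow_pos hp.pos e).ne'⟩, by
          simp [Nat.Coprime, Nat.div_self (pow_pos hp.pos e)]⟩
      · exact ⟨⟨one_dvd _, (pow_pos hp.pos e).ne'⟩, by simp [Nat.Coprime]⟩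
  rw [hkey]
  rw [Finset.sum_insert (by simp [Nat.one_lt_pow he.ne' hp.one_lt |>.ne', hp.one_lt.ne', he.ne']), Finset.sum_singleton]



lemma usigma_mul {m n : ℕ} (hmn : Nat.Coprime m n) (hm : 0 < m) (hn : 0 < n) :
    usigma (m * n) = usigma m * usigma n := by
  unfold usigma
  rw [Finset.sum_mul_sum, ← Finset.sum_product']
  refine Finset.sum_nbij' (fun d => (Nat.gcd d m, Nat.gcd d n)) (fun pr => pr.1 * pr.2) ?_ ?_ ?_ ?_ ?_
  · intro d hd
    simp only [Finset.mem_filter, Nat.mem_divisors] at hd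
    obtain ⟨⟨hdvd, _⟩, hcop⟩ := hd
    have hgg : Nat.gcd d m * Nat.gcd d n = d :=
      (Nat.gcd_mul_gcd_eq_iff_dvd_mul_of_coprime hmn).mpr hdvd
    have h1 : Nat.gcd d m ∣ m := Nat.gcd_dvd_right d m
    have h2 : Nat.gcd d n ∣ n := Nat.gcd_dvd_right d n
    have hquot : (m * n) / d = (m / Nat.gcd d m) * (n / Nat.gcd d n) := by
      rw [Nat.div_mul_div_comm h1 h2, hgg]
    simp only [Finset.mem_product, Finset.mem_filter, Nat.mem_divisors]
    refine ⟨⟨⟨h1, hm.ne'⟩, ?_⟩, ⟨h2, hn.ne'⟩, ?_⟩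
    · refine Nat.Coprime.coprime_dvd_right ?_ (Nat.Coprime.coprime_dvd_left (Nat.gcd_dvd_left d m) hcop)
      rw [hquot]; exact dvd_mul_right _ _
    · refine Nat.Coprime.coprime_dvd_right ?_ (Nat.Coprime.coprime_dvd_left (Nat.gcd_dvd_left d n) hcop)
      rw [hquot]; exact dvd_mul_left _ _
  · intro pr hpr
    simp only [Finset.mem_product, Finset.mem_filter, Nat.mem_divisors] at hpr
    obtain ⟨⟨⟨h1, _⟩, hc1⟩, ⟨h2, _⟩, hc2⟩ := hpr
    have hquot : (m * n) / (pr.1 * pr.2) = (m / pr.1) * (n / pr.2) :=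
      (Nat.div_mul_div_comm h1 h2).symm
    simp only [Finset.mem_filter, Nat.mem_divisors]
    refine ⟨⟨mul_dvd_mul h1 h2, (Nat.mul_pos hm hn).ne'⟩, ?_⟩
    rw [Nat.Coprime, hquot]
    have c12 : Nat.Coprime pr.1 (n / pr.2) :=
      Nat.Coprime.coprime_dvd_right (Nat.div_dvd_of_dvd h2)
        (Nat.Coprime.coprime_dvd_left h1 hmn)
    have c21 : Nat.Coprime pr.2 (m / pr.1) :=
      Nat.Coprime.coprime_dvd_right (Nat.div_dvd_of_dvd h1)
        (Nat.Coprime.coprime_dvd_left h2 hmn.symm)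
    exact Nat.Coprime.mul ((hc1.mul_right c12)) ((c21.mul_right hc2))
  · intro d hd
    simp only [Finset.mem_filter, Nat.mem_divisors] at hd
    exact (Nat.gcd_mul_gcd_eq_iff_dvd_mul_of_coprime hmn).mpr hd.1.1
  · intro pr hpr
    simp only [Finset.mem_product, Finset.mem_filter, Nat.mem_divisors] at hpr
    obtain ⟨⟨⟨h1, _⟩, _⟩, ⟨h2, _⟩, _⟩ := hpr
    have cA : Nat.Coprime pr.2 m := Nat.Coprime.coprime_dvd_left h2 hmn.symm
    have cB : Nat.Coprime pr.1 n := Nat.Coprime.coprime_dvd_left h1 hmn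
    have e1 : Nat.gcd (pr.1 * pr.2) m = pr.1 := by
      rw [Nat.Coprime.gcd_mul_right_cancel pr.1 cA]
      exact Nat.gcd_eq_left h1
    have e2 : Nat.gcd (pr.1 * pr.2) n = pr.2 := by
      rw [Nat.Coprime.gcd_mul_left_cancel pr.2 cB]
      exact Nat.gcd_eq_left h2
    simp [e1, e2]
  · intro d hd
    simp only [Finset.mem_filter, Nat.mem_divisors] at hd
    exact ((Nat.gcd_mul_gcd_eq_iff_dvd_mul_of_coprime hmn).mpr hd.1.1).symm




lemma usigma_mul' {m n : ℕ} (hmn : Nat.Coprime m n) :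
    usigma (m * n) = usigma m * usigma n := by
  rcases Nat.eq_zero_or_pos m with rfl | hm
  · have : n = 1 := by simpa [Nat.Coprime] using hmn
    simp [this, usigma_zero, usigma_one]
  rcases Nat.eq_zero_or_pos n with rfl | hn
  · have : m = 1 := by simpa [Nat.Coprime] using hmn
    simp [this, usigma_zero, usigma_one]
  exact usigma_mul hmn hm hn

def U : ArithmeticFunction ℕ := ⟨usigma, usigma_zero⟩

lemma U_isMult : U.IsMultiplicative :=
  ⟨usigma_one, fun h => usigma_mul' h⟩

lemma usigma_prod_formula {n : ℕ} (hn : n ≠ 0) :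
    usigma n = ∏ p ∈ n.primeFactors, (p ^ n.factorization p + 1) := by
  have h := U_isMult.multiplicative_factorization U (by exact hn)
  have : usigma n = n.factorization.prod fun p k => usigma (p ^ k) := h
  rw [this, Finsupp.prod]
  rw [Nat.support_factorization]
  refine Finset.prod_congr rfl fun p hp => ?_
  exact usigma_prime_pow (Nat.prime_of_mem_primeFactors hp)
    (Nat.Prime.factorization_pos_of_dvd (Nat.prime_of_mem_primeFactors hp) hn
      (Nat.dvd_of_mem_primeFactors hp))


open Finset

lemma one_sub_sum_le_prod {α : Type*} (s : Finset α) (f : α → ℝ)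
    (h0 : ∀ i ∈ s, 0 ≤ f i) (h1 : ∀ i ∈ s, f i ≤ 1) :
    1 - ∑ i ∈ s, f i ≤ ∏ i ∈ s, (1 - f i) := by
  classical
  induction s using Finset.induction_on with
  | empty => simp
  | @insert a s' hx ih =>
    rw [Finset.sum_insert hx, Finset.prod_insert hx]
    have ha0 := h0 a (mem_insert_self a s')
    have ha1 := h1 a (mem_insert_self a s')
    have ihs := ih (fun i hi => h0 i (mem_insert_of_mem hi)) (fun i hi => h1 i (mem_insert_of_mem hi))
    have hsum0 : ∑ i ∈ s', f i ≥ 0 := Finset.sum_nonneg (fun i hi => h0 i (mem_insert_of_mem hi))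
    nlinarith [Finset.prod_nonneg (fun i (hi : i ∈ s') => sub_nonneg.mpr (h1 i (mem_insert_of_mem hi)))]

lemma geom_range_le {x : ℝ} (h0 : 0 ≤ x) (h1 : x < 1) (n : ℕ) :
    ∑ i ∈ Finset.range n, x ^ i ≤ 1 / (1 - x) := by
  have hpos : (0:ℝ) < 1 - x := by linarith
  rw [le_div_iff₀ hpos]
  have h := geom_sum_mul x n
  nlinarith [pow_nonneg h0 n]

/-- sum of x^b over Icc 1 n is at most x/(1-x) -/
lemma geom_Icc_le {x : ℝ} (h0 : 0 ≤ x) (h1 : x < 1) (n : ℕ) :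
    ∑ b ∈ Finset.Icc 1 n, x ^ b ≤ x / (1 - x) := by
  have hpos : (0:ℝ) < 1 - x := by linarith
  have : Finset.Icc 1 n = Finset.Ico 1 (n+1) := by rw [Finset.Ico_add_one_right_eq_Icc]
  rw [this, Finset.sum_Ico_eq_sum_range]
  have : ∑ i ∈ Finset.range (n + 1 - 1), x ^ (1 + i) = x * ∑ i ∈ Finset.range n, x ^ i := by
    rw [Finset.mul_sum]
    simp only [Nat.add_sub_cancel]
    exact Finset.sum_congr rfl fun i _ => by rw [pow_add, pow_one]
  rw [this, div_eq_mul_one_div]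
  exact mul_le_mul_of_nonneg_left (geom_range_le h0 h1 n) h0

/-- tail bound: finite set of naturals all ≥ k -/
lemma sum_halfpow_tail_le (A : Finset ℕ) (k : ℕ) (hk : ∀ v ∈ A, k ≤ v) :
    ∑ v ∈ A, ((1:ℝ) / 2) ^ v ≤ 2 * (1/2)^k := by
  classical
  have hsub : A ⊆ Finset.Ico k (A.sup id + 1) := by
    intro v hv
    simp only [Finset.mem_Ico]
    exact ⟨hk v hv, Nat.lt_succ_of_le (Finset.le_sup (f := id) hv)⟩
  calc ∑ v ∈ A, ((1:ℝ)/2)^v ≤ ∑ v ∈ Finset.Ico k (A.sup id + 1), ((1:ℝ)/2)^v := by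
        apply Finset.sum_le_sum_of_subset_of_nonneg hsub
        intro i _ _; positivity
    _ = ∑ i ∈ Finset.range (A.sup id + 1 - k), ((1:ℝ)/2)^(k + i) := by
        rw [Finset.sum_Ico_eq_sum_range]
    _ = (1/2)^k * ∑ i ∈ Finset.range (A.sup id + 1 - k), ((1:ℝ)/2)^i := by
        rw [Finset.mul_sum]; exact Finset.sum_congr rfl fun i _ => pow_add _ _ _
    _ ≤ (1/2)^k * 2 := by
        apply mul_le_mul_of_nonneg_left _ (by positivity)
        have := geom_range_le (by norm_num : (0:ℝ) ≤ 1/2) (by norm_num) (A.sup id + 1 - k)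
        linarith [this]
    _ = 2 * (1/2)^k := by ring


lemma not_isPrimePow_of_two_primes {n p₁ p₂ : ℕ} (h1 : p₁.Prime) (h2 : p₂.Prime)
    (hne : p₁ ≠ p₂) (d1 : p₁ ∣ n) (d2 : p₂ ∣ n) : ¬ IsPrimePow n := by
  rintro ⟨p, k, hp, hk, rfl⟩
  have hpp : p.Prime := Nat.prime_iff.mpr hp
  have e1 : p₁ = p := (Nat.prime_dvd_prime_iff_eq h1 hpp).mp (h1.dvd_of_dvd_pow d1)
  have e2 : p₂ = p := (Nat.prime_dvd_prime_iff_eq h2 hpp).mp (h2.dvd_of_dvd_pow d2)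
  exact hne (e1.trans e2.symm)

lemma mersenne_classify {a : ℕ} (h2 : 2 ≤ a) (h : IsPrimePow (2 ^ a - 1)) :
    a = 2 ∨ a = 3 ∨ a = 5 ∨ a = 7 ∨ a = 13 ∨ 17 ≤ a := by
  by_contra hc
  push_neg at hc
  obtain ⟨n2, n3, n5, n7, n13, hle⟩ := hc
  have h16 : a ≤ 16 := by omega
  interval_cases a
  all_goals try omega
  all_goals norm_num at h
  exacts [
    not_isPrimePow_of_two_primes (by norm_num : Nat.Prime 3) (by norm_num : Nat.Prime 5)
      (by norm_num) (by norm_num) (by norm_num) h,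
    not_isPrimePow_of_two_primes (by norm_num : Nat.Prime 3) (by norm_num : Nat.Prime 7)
      (by norm_num) (by norm_num) (by norm_num) h,
    not_isPrimePow_of_two_primes (by norm_num : Nat.Prime 3) (by norm_num : Nat.Prime 5)
      (by norm_num) (by norm_num) (by norm_num) h,
    not_isPrimePow_of_two_primes (by norm_num : Nat.Prime 7) (by norm_num : Nat.Prime 73)
      (by norm_num) (by norm_num) (by norm_num) h,
    not_isPrimePow_of_two_primes (by norm_num : Nat.Prime 3) (by norm_num : Nat.Prime 11)
      (by norm_num) (by norm_num) (by norm_num) h,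
    not_isPrimePow_of_two_primes (by norm_num : Nat.Prime 23) (by norm_num : Nat.Prime 89)
      (by norm_num) (by norm_num) (by norm_num) h,
    not_isPrimePow_of_two_primes (by norm_num : Nat.Prime 3) (by norm_num : Nat.Prime 5)
      (by norm_num) (by norm_num) (by norm_num) h,
    not_isPrimePow_of_two_primes (by norm_num : Nat.Prime 3) (by norm_num : Nat.Prime 43)
      (by norm_num) (by norm_num) (by norm_num) h,
    not_isPrimePow_of_two_primes (by norm_num : Nat.Prime 7) (by norm_num : Nat.Prime 31)
      (by norm_num) (by norm_num) (by norm_num) h,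
    not_isPrimePow_of_two_primes (by norm_num : Nat.Prime 3) (by norm_num : Nat.Prime 5)
      (by norm_num) (by norm_num) (by norm_num) h]


open Finset


lemma contra_num (X Y Pi s t x0 y0 s0 t0 : ℝ)
    (hx : x0 ≤ X) (hy : y0 ≤ Y) (hx0 : 0 < x0) (hy0 : 0 < y0)
    (hs : s ≤ s0) (ht : t ≤ t0) (hs0 : s0 < 1) (ht0 : t0 < 1)
    (hs' : 0 ≤ s) (ht' : 0 ≤ t)
    (hP : (1 - s) * (1 - t) ≤ Pi)
    (hE : (X + 1) * (Y + 1) = 2 * X * Y * Pi)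
    (hnum : (x0 + 1) * (y0 + 1) < 2 * x0 * y0 * ((1 - s0) * (1 - t0))) : False := by
  have hX0 : 0 < X := lt_of_lt_of_le hx0 hx
  have hY0 : 0 < Y := lt_of_lt_of_le hy0 hy
  have hc0 : (1 - s0) * (1 - t0) ≤ (1 - s) * (1 - t) := by nlinarith
  have hP0 : (1 - s0) * (1 - t0) ≤ Pi := le_trans hc0 hP
  have key1 : 2 * X * Y * ((1 - s0) * (1 - t0)) ≤ (X + 1) * (Y + 1) := by
    have h := mul_le_mul_of_nonneg_left hP0 (by positivity : (0:ℝ) ≤ 2 * X * Y)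
    rw [hE]; linarith
  have key2 : (X + 1) * (Y + 1) * (x0 * y0) ≤ (x0 + 1) * (y0 + 1) * (X * Y) := by
    nlinarith [mul_le_mul_of_nonneg_left hy (mul_nonneg hx0.le hX0.le),
      mul_le_mul_of_nonneg_left hx (mul_nonneg hy0.le hY0.le),
      mul_le_mul hx hy hy0.le hX0.le]
  nlinarith [mul_pos hX0 hY0, mul_pos hx0 hy0,
    mul_lt_mul_of_pos_right hnum (mul_pos hX0 hY0),
    mul_le_mul_of_nonneg_right key1 (le_of_lt (mul_pos hx0 hy0))]

set_option maxHeartbeats 2000000 in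
lemma core (q f₁ f₂ : ℕ) (hq : q.Prime) (hq11 : 11 ≤ q) (hf₁ : 0 < f₁) (hf₂ : 0 < f₂)
    (hY : 17 ≤ q ∨ 2 ≤ f₂)
    (P : Finset ℕ) (a b : ℕ → ℕ)
    (ha1 : ∀ p ∈ P, 1 ≤ a p)
    (hpp : ∀ p ∈ P, IsPrimePow (2 ^ a p * q ^ b p - 1))
    (hinj : ∀ p ∈ P, ∀ p' ∈ P, a p = a p' → b p = b p' → p = p')
    (hsa : ∑ p ∈ P, a p = f₁) (hsb : ∑ p ∈ P, b p = f₂)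
    (heq : (2 ^ f₁ + 1) * (q ^ f₂ + 1) = 2 * ∏ p ∈ P, (2 ^ a p * q ^ b p - 1)) :
    False := by
  classical
  -- basic facts about components
  have hC4 : ∀ p ∈ P, 4 ≤ 2 ^ a p * q ^ b p := by
    intro p hp
    have h2 : 2 ∣ 2 ^ a p * q ^ b p :=
      dvd_mul_of_dvd_left (dvd_pow_self 2 (Nat.one_le_iff_ne_zero.mp (ha1 p hp))) _
    have h3 := (hpp p hp).two_le
    omega
  -- real versions
  set X : ℝ := (2:ℝ) ^ f₁ with hXdef
  set Y : ℝ := (q:ℝ) ^ f₂ with hYdef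
  have hq1R : (11:ℝ) ≤ (q:ℝ) := by exact_mod_cast hq11
  have hX0 : 0 < X := by positivity
  have hY0 : 0 < Y := by positivity
  have hCpos : ∀ p ∈ P, (0:ℝ) < (2:ℝ) ^ a p * (q:ℝ) ^ b p := by
    intro p hp; positivity
  have hC4R : ∀ p ∈ P, (4:ℝ) ≤ (2:ℝ) ^ a p * (q:ℝ) ^ b p := by
    intro p hp; exact_mod_cast hC4 p hp
  -- cast the main equation
  have heqR : (X + 1) * (Y + 1) = 2 * ∏ p ∈ P, ((2:ℝ) ^ a p * (q:ℝ) ^ b p - 1) := by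
    have hc : ∏ i ∈ P, ((2 ^ a i * q ^ b i - 1 : ℕ) : ℝ)
        = ∏ p ∈ P, ((2:ℝ) ^ a p * (q:ℝ) ^ b p - 1) := by
      refine Finset.prod_congr rfl fun p hp => ?_
      rw [Nat.cast_sub (by linarith [hC4 p hp] : 1 ≤ 2 ^ a p * q ^ b p)]
      push_cast; ring
    have hthis := congrArg (fun n : ℕ => (n : ℝ)) heq
    push_cast at hthis
    rw [hc] at hthis
    rw [hXdef, hYdef]
    exact hthis
  -- product of C's
  have hprodC : ∏ p ∈ P, ((2:ℝ) ^ a p * (q:ℝ) ^ b p) = X * Y := by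
    rw [Finset.prod_mul_distrib, Finset.prod_pow_eq_pow_sum, Finset.prod_pow_eq_pow_sum,
      hsa, hsb]
  -- master equation
  set Pi : ℝ := ∏ p ∈ P, (1 - 1 / ((2:ℝ) ^ a p * (q:ℝ) ^ b p)) with hPidef
  have hXYPi : X * Y * Pi = ∏ p ∈ P, ((2:ℝ) ^ a p * (q:ℝ) ^ b p - 1) := by
    rw [hPidef, ← hprodC, ← Finset.prod_mul_distrib]
    refine Finset.prod_congr rfl fun p hp => ?_
    rw [mul_sub, mul_one, mul_one_div, div_self (hCpos p hp).ne']
  have hmaster : (X + 1) * (Y + 1) = 2 * X * Y * Pi := by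
    rw [heqR, ← hXYPi]; ring
  -- split P into components with b = 0 and b ≥ 1
  set S0 : Finset ℕ := P.filter (fun p => b p = 0) with hS0def
  set S1 : Finset ℕ := P.filter (fun p => ¬ (b p = 0)) with hS1def
  have hS0P : S0 ⊆ P := Finset.filter_subset _ _
  have hS1P : S1 ⊆ P := Finset.filter_subset _ _
  have ha2S0 : ∀ p ∈ S0, 2 ≤ a p := by
    intro p hp
    have hb0 : b p = 0 := (Finset.mem_filter.mp hp).2
    have h4 := hC4 p (hS0P hp)
    rw [hb0, pow_zero, mul_one] at h4
    by_contra hlt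
    push_neg at hlt
    have : 2 ^ a p ≤ 2 ^ 1 := Nat.pow_le_pow_right (by norm_num) (by omega)
    omega
  set s : ℝ := ∑ p ∈ S0, ((1:ℝ)/2) ^ a p with hsdef
  set t : ℝ := ∑ p ∈ S1, 1 / ((2:ℝ) ^ a p * (q:ℝ) ^ b p) with htdef
  have hs0 : 0 ≤ s := Finset.sum_nonneg fun p _ => by positivity
  have ht0 : 0 ≤ t := Finset.sum_nonneg fun p _ => by positivity
  -- bound on t
  have hqR1 : (1:ℝ) < (q:ℝ) := by linarith
  have ht_le : t ≤ 1 / ((q:ℝ) - 1) := by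
    have hterm : ∀ p ∈ S1, 1 / ((2:ℝ) ^ a p * (q:ℝ) ^ b p)
        = ((1:ℝ)/2) ^ a p * ((1:ℝ)/(q:ℝ)) ^ b p := by
      intro p hp
      rw [div_pow, div_pow, one_pow, one_pow, div_mul_div_comm, one_mul]
    rw [htdef, Finset.sum_congr rfl hterm]
    have hinj1 : Set.InjOn (fun p => (a p, b p)) S1 := by
      intro x hx y hy hxy
      simp only [Prod.mk.injEq] at hxy
      exact hinj x (hS1P (by exact_mod_cast hx)) y (hS1P (by exact_mod_cast hy)) hxy.1 hxy.2
    rw [← Finset.sum_image (f := fun pr : ℕ × ℕ => ((1:ℝ)/2) ^ pr.1 * ((1:ℝ)/(q:ℝ)) ^ pr.2)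
      (g := fun p => (a p, b p)) (fun x hx y hy hxy => hinj1 hx hy hxy)]
    have hsub : S1.image (fun p => (a p, b p)) ⊆ Finset.Icc 1 f₁ ×ˢ Finset.Icc 1 f₂ := by
      intro pr hpr
      obtain ⟨p, hp, rfl⟩ := Finset.mem_image.mp hpr
      have hpP : p ∈ P := hS1P hp
      have hb1 : b p ≠ 0 := (Finset.mem_filter.mp hp).2
      have haf : a p ≤ f₁ := hsa ▸ Finset.single_le_sum (fun i _ => Nat.zero_le _) hpP
      have hbf : b p ≤ f₂ := hsb ▸ Finset.single_le_sum (fun i _ => Nat.zero_le _) hpP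
      simp only [Finset.mem_product, Finset.mem_Icc]
      exact ⟨⟨ha1 p hpP, haf⟩, ⟨Nat.one_le_iff_ne_zero.mpr hb1, hbf⟩⟩
    calc ∑ pr ∈ S1.image (fun p => (a p, b p)), ((1:ℝ)/2) ^ pr.1 * ((1:ℝ)/(q:ℝ)) ^ pr.2
        ≤ ∑ pr ∈ Finset.Icc 1 f₁ ×ˢ Finset.Icc 1 f₂, ((1:ℝ)/2) ^ pr.1 * ((1:ℝ)/(q:ℝ)) ^ pr.2 := by
          apply Finset.sum_le_sum_of_subset_of_nonneg hsub
          intro i _ _; positivity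
      _ = (∑ u ∈ Finset.Icc 1 f₁, ((1:ℝ)/2) ^ u) * (∑ v ∈ Finset.Icc 1 f₂, ((1:ℝ)/(q:ℝ)) ^ v) := by
          rw [Finset.sum_mul_sum]
          rw [Finset.sum_product]
      _ ≤ 1 * (((1:ℝ)/(q:ℝ)) / (1 - (1:ℝ)/(q:ℝ))) := by
          apply mul_le_mul
          · have := geom_Icc_le (by norm_num : (0:ℝ) ≤ 1/2) (by norm_num) f₁
            linarith [this]
          · exact geom_Icc_le (by positivity) (by rw [div_lt_one (by linarith)]; linarith) f₂
          · apply Finset.sum_nonneg; intro v _; positivity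
          · norm_num
      _ = 1 / ((q:ℝ) - 1) := by
          rw [one_mul]
          field_simp
  have ht10 : t ≤ 1/10 := le_trans ht_le (by rw [div_le_div_iff₀ (by linarith) (by norm_num)]; linarith)
  -- Pi ≥ (1-s)(1-t)
  have hPi_ge : (1 - s) * (1 - t) ≤ Pi := by
    have hbnd : ∀ p ∈ P, 0 ≤ 1 / ((2:ℝ) ^ a p * (q:ℝ) ^ b p)
        ∧ 1 / ((2:ℝ) ^ a p * (q:ℝ) ^ b p) ≤ 1 := by
      intro p hp
      refine ⟨by positivity, ?_⟩
      rw [div_le_one (hCpos p hp)]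
      linarith [hC4R p hp]
    have hsplit : Pi = (∏ p ∈ S0, (1 - 1 / ((2:ℝ) ^ a p * (q:ℝ) ^ b p)))
        * (∏ p ∈ S1, (1 - 1 / ((2:ℝ) ^ a p * (q:ℝ) ^ b p))) := by
      rw [hPidef, hS0def, hS1def, Finset.prod_filter_mul_prod_filter_not]
    have h0 : 1 - s ≤ ∏ p ∈ S0, (1 - 1 / ((2:ℝ) ^ a p * (q:ℝ) ^ b p)) := by
      have he : ∀ p ∈ S0, ((1:ℝ)/2) ^ a p = 1 / ((2:ℝ) ^ a p * (q:ℝ) ^ b p) := by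
        intro p hp
        have hb0 : b p = 0 := (Finset.mem_filter.mp hp).2
        rw [hb0, pow_zero, mul_one, div_pow, one_pow]
      rw [hsdef, Finset.sum_congr rfl he]
      exact one_sub_sum_le_prod _ _ (fun p hp => (hbnd p (hS0P hp)).1)
        (fun p hp => (hbnd p (hS0P hp)).2)
    have h1 : 1 - t ≤ ∏ p ∈ S1, (1 - 1 / ((2:ℝ) ^ a p * (q:ℝ) ^ b p)) :=
      one_sub_sum_le_prod _ _ (fun p hp => (hbnd p (hS1P hp)).1)
        (fun p hp => (hbnd p (hS1P hp)).2)
    have hprod0 : (0:ℝ) ≤ ∏ p ∈ S0, (1 - 1 / ((2:ℝ) ^ a p * (q:ℝ) ^ b p)) :=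
      Finset.prod_nonneg fun p hp => by linarith [(hbnd p (hS0P hp)).2]
    rw [hsplit]
    exact mul_le_mul h0 h1 (by linarith) hprod0
  -- S1 is nonempty
  have hsplit_a : ∑ p ∈ S0, a p + ∑ p ∈ S1, a p = f₁ := by
    rw [hS0def, hS1def, Finset.sum_filter_add_sum_filter_not, hsa]
  have hsplit_b : ∑ p ∈ S0, b p + ∑ p ∈ S1, b p = f₂ := by
    rw [hS0def, hS1def, Finset.sum_filter_add_sum_filter_not, hsb]
  have hS0b : ∑ p ∈ S0, b p = 0 := by
    apply Finset.sum_eq_zero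
    intro p hp
    exact (Finset.mem_filter.mp hp).2
  have hS1ne : S1.Nonempty := by
    rcases Finset.eq_empty_or_nonempty S1 with he | hne
    · rw [he] at hsplit_b
      simp [hS0b] at hsplit_b
      omega
    · exact hne
  have hS1card : 1 ≤ ∑ p ∈ S1, a p := by
    obtain ⟨p, hp⟩ := hS1ne
    calc 1 ≤ a p := ha1 p (hS1P hp)
      _ ≤ ∑ p ∈ S1, a p := Finset.single_le_sum (fun i _ => Nat.zero_le _) hp
  -- subcomponents of S0
  set S02 : Finset ℕ := S0.filter (fun p => a p = 2) with hS02def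
  set S03 : Finset ℕ := S0.filter (fun p => ¬ (a p = 2)) with hS03def
  have hs_split : s = (∑ p ∈ S02, ((1:ℝ)/2) ^ a p) + (∑ p ∈ S03, ((1:ℝ)/2) ^ a p) := by
    rw [hsdef, hS02def, hS03def, Finset.sum_filter_add_sum_filter_not]
  have hs2_le : (∑ p ∈ S02, ((1:ℝ)/2) ^ a p) ≤ 1/4 := by
    have hcard : S02.card ≤ 1 := by
      rw [Finset.card_le_one]
      intro x hx y hy
      have hx' := Finset.mem_filter.mp hx
      have hy' := Finset.mem_filter.mp hy
      exact hinj x (hS0P hx'.1) y (hS0P hy'.1) (hx'.2.trans hy'.2.symm)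
        ((Finset.mem_filter.mp hx'.1).2.trans (Finset.mem_filter.mp hy'.1).2.symm)
    have heach : ∀ p ∈ S02, ((1:ℝ)/2) ^ a p = 1/4 := by
      intro p hp
      rw [(Finset.mem_filter.mp hp).2]
      norm_num
    rw [Finset.sum_congr rfl heach, Finset.sum_const]
    rcases Nat.le_one_iff_eq_zero_or_eq_one.mp hcard with h | h <;> rw [h] <;> norm_num
  have hs2_nonneg : (0:ℝ) ≤ ∑ p ∈ S02, ((1:ℝ)/2) ^ a p :=
    Finset.sum_nonneg fun p _ => by positivity
  have hs3_nonneg : (0:ℝ) ≤ ∑ p ∈ S03, ((1:ℝ)/2) ^ a p :=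
    Finset.sum_nonneg fun p _ => by positivity
  -- bound on the S03 sum
  have hs3_le : (∑ p ∈ S03, ((1:ℝ)/2) ^ a p) ≤ 10761/65536 := by
    have hinj3 : ∀ x ∈ S03, ∀ y ∈ S03, a x = a y → x = y := by
      intro x hx y hy hxy
      have hx' := Finset.mem_filter.mp hx
      have hy' := Finset.mem_filter.mp hy
      exact hinj x (hS0P hx'.1) y (hS0P hy'.1) hxy
        ((Finset.mem_filter.mp hx'.1).2.trans (Finset.mem_filter.mp hy'.1).2.symm)
    rw [← Finset.sum_image (f := fun v : ℕ => ((1:ℝ)/2) ^ v) (g := a) hinj3]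
    set A3 : Finset ℕ := S03.image a with hA3def
    have hclass : ∀ v ∈ A3, (v = 3 ∨ v = 5 ∨ v = 7 ∨ v = 13) ∨ 17 ≤ v := by
      intro v hv
      obtain ⟨p, hp, rfl⟩ := Finset.mem_image.mp hv
      have hp0 : p ∈ S0 := (Finset.mem_filter.mp hp).1
      have hne2 : a p ≠ 2 := (Finset.mem_filter.mp hp).2
      have hb0 : b p = 0 := (Finset.mem_filter.mp hp0).2
      have hppow := hpp p (hS0P hp0)
      rw [hb0, pow_zero, mul_one] at hppow
      have := mersenne_classify (ha2S0 p hp0) hppow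
      tauto
    have hA3split : (∑ v ∈ A3, ((1:ℝ)/2) ^ v)
        = (∑ v ∈ A3.filter (fun v => v ∈ ({3,5,7,13} : Finset ℕ)), ((1:ℝ)/2) ^ v)
          + (∑ v ∈ A3.filter (fun v => ¬ (v ∈ ({3,5,7,13} : Finset ℕ))), ((1:ℝ)/2) ^ v) := by
      rw [Finset.sum_filter_add_sum_filter_not]
    rw [hA3split]
    have hpart1 : (∑ v ∈ A3.filter (fun v => v ∈ ({3,5,7,13} : Finset ℕ)), ((1:ℝ)/2) ^ v)
        ≤ ∑ v ∈ ({3,5,7,13} : Finset ℕ), ((1:ℝ)/2) ^ v := by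
      apply Finset.sum_le_sum_of_subset_of_nonneg
      · intro v hv
        exact (Finset.mem_filter.mp hv).2
      · intro i _ _; positivity
    have hval : (∑ v ∈ ({3,5,7,13} : Finset ℕ), ((1:ℝ)/2) ^ v) = 10760/65536 := by
      norm_num [Finset.sum_insert, Finset.mem_insert]
    have hpart2 : (∑ v ∈ A3.filter (fun v => ¬ (v ∈ ({3,5,7,13} : Finset ℕ))), ((1:ℝ)/2) ^ v)
        ≤ 2 * (1/2)^17 := by
      apply sum_halfpow_tail_le
      intro v hv
      have hv1 := (Finset.mem_filter.mp hv).1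
      have hv2 := (Finset.mem_filter.mp hv).2
      rcases hclass v hv1 with h | h
      · exfalso; apply hv2; simp only [Finset.mem_insert, Finset.mem_singleton]; tauto
      · exact h
    have : (2:ℝ) * (1/2)^17 = 1/65536 := by norm_num
    rw [this] at hpart2
    linarith
  -- lower bounds for Y
  have hYlow : (17:ℝ) ≤ Y := by
    rcases hY with h17 | hf22
    · have : (17:ℝ) ≤ (q:ℝ) := by exact_mod_cast h17
      calc (17:ℝ) ≤ (q:ℝ) := this
        _ ≤ (q:ℝ) ^ f₂ := le_self_pow₀ (by linarith) (Nat.pos_iff_ne_zero.mp hf₂)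
    · have h1 : (121:ℝ) ≤ (q:ℝ)^2 := by nlinarith [hq1R]
      have h2 : (q:ℝ)^2 ≤ (q:ℝ) ^ f₂ := pow_le_pow_right₀ (by linarith) hf22
      rw [hYdef]; linarith
  -- X lower bound helper
  have hXlow : ∀ k : ℕ, k ≤ f₁ → (2:ℝ)^k ≤ X := by
    intro k hk
    rw [hXdef]
    exact pow_le_pow_right₀ one_le_two hk
  -- final case analysis
  by_cases hS0e : S0 = ∅
  · have hse : s = 0 := by rw [hsdef, hS0e]; simp
    have hx : (2:ℝ) ≤ X := by simpa using hXlow 1 hf₁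
    exact contra_num X Y Pi s t 2 17 0 (1/10) hx hYlow (by norm_num) (by norm_num)
      (by rw [hse]) ht10 (by norm_num) (by norm_num) hs0 ht0 hPi_ge hmaster (by norm_num)
  · by_cases hS02e : S02 = ∅
    · have hs2z : (∑ p ∈ S02, ((1:ℝ)/2) ^ a p) = 0 := by rw [hS02e]; simp
      have hsle : s ≤ 10761/65536 := by rw [hs_split, hs2z]; linarith
      obtain ⟨p0, hp0⟩ := Finset.nonempty_iff_ne_empty.mpr hS0e
      have hp0a : 3 ≤ a p0 := by
        have h2 := ha2S0 p0 hp0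
        have hmem : p0 ∈ S03 := by
          rw [hS03def, Finset.mem_filter]
          refine ⟨hp0, fun h2' => ?_⟩
          have : p0 ∈ S02 := by rw [hS02def]; exact Finset.mem_filter.mpr ⟨hp0, h2'⟩
          rw [hS02e] at this
          simp at this
        have hne2 := (Finset.mem_filter.mp hmem).2
        omega
      have hf14 : 4 ≤ f₁ := by
        have h1 : 3 ≤ ∑ p ∈ S0, a p :=
          le_trans hp0a (Finset.single_le_sum (fun i _ => Nat.zero_le _) hp0)
        omega
      have hx : (16:ℝ) ≤ X := by
        have := hXlow 4 hf14; norm_num at this; exact this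
      exact contra_num X Y Pi s t 16 17 (10761/65536) (1/10) hx hYlow (by norm_num) (by norm_num)
        hsle ht10 (by norm_num) (by norm_num) hs0 ht0 hPi_ge hmaster (by norm_num)
    · obtain ⟨p2, hp2⟩ := Finset.nonempty_iff_ne_empty.mpr hS02e
      have hp2a : a p2 = 2 := (Finset.mem_filter.mp hp2).2
      have hp2S0 : p2 ∈ S0 := (Finset.mem_filter.mp hp2).1
      by_cases hS03e : S03 = ∅
      · have hs3z : (∑ p ∈ S03, ((1:ℝ)/2) ^ a p) = 0 := by rw [hS03e]; simp
        have hsle : s ≤ 1/4 := by rw [hs_split, hs3z]; linarith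
        have hf13 : 3 ≤ f₁ := by
          have h1 : 2 ≤ ∑ p ∈ S0, a p :=
            hp2a ▸ Finset.single_le_sum (fun i _ => Nat.zero_le _) hp2S0
          omega
        have hx : (8:ℝ) ≤ X := by
          have := hXlow 3 hf13; norm_num at this; exact this
        exact contra_num X Y Pi s t 8 17 (1/4) (1/10) hx hYlow (by norm_num) (by norm_num)
          hsle ht10 (by norm_num) (by norm_num) hs0 ht0 hPi_ge hmaster (by norm_num)
      · obtain ⟨p3, hp3⟩ := Finset.nonempty_iff_ne_empty.mpr hS03e
        have hp3S0 : p3 ∈ S0 := (Finset.mem_filter.mp hp3).1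
        have hp3a : 3 ≤ a p3 := by
          have h2 := ha2S0 p3 hp3S0
          have hne2 := (Finset.mem_filter.mp hp3).2
          omega
        have hne : p2 ≠ p3 := by
          intro h; rw [h] at hp2a; omega
        have hA0 : 5 ≤ ∑ p ∈ S0, a p := by
          have hsub : ({p2, p3} : Finset ℕ) ⊆ S0 := by
            intro x hx
            rcases Finset.mem_insert.mp hx with rfl | hx
            · exact hp2S0
            · rw [Finset.mem_singleton.mp hx]; exact hp3S0
          calc 5 ≤ ∑ p ∈ ({p2, p3} : Finset ℕ), a p := by
                rw [Finset.sum_insert (by simpa using hne), Finset.sum_singleton]; omega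
            _ ≤ ∑ p ∈ S0, a p := Finset.sum_le_sum_of_subset hsub
        have hf16 : 6 ≤ f₁ := by omega
        have hx : (64:ℝ) ≤ X := by
          have := hXlow 6 hf16; norm_num at this; exact this
        have hsle : s ≤ 27145/65536 := by rw [hs_split]; linarith
        rcases hY with h17 | hf22
        · have ht16 : t ≤ 1/16 := le_trans ht_le (by
            have h17R : (17:ℝ) ≤ (q:ℝ) := by exact_mod_cast h17
            rw [div_le_div_iff₀ (by linarith) (by norm_num)]; linarith)
          exact contra_num X Y Pi s t 64 17 (27145/65536) (1/16) hx hYlow (by norm_num)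
            (by norm_num) hsle ht16 (by norm_num) (by norm_num) hs0 ht0 hPi_ge hmaster
            (by norm_num)
        · have hY121 : (121:ℝ) ≤ Y := by
            have h1 : (121:ℝ) ≤ (q:ℝ)^2 := by nlinarith [hq1R]
            have h2 : (q:ℝ)^2 ≤ (q:ℝ) ^ f₂ := pow_le_pow_right₀ (by linarith) hf22
            rw [hYdef]; linarith
          exact contra_num X Y Pi s t 64 121 (27145/65536) (1/10) hx hY121 (by norm_num)
            (by norm_num) hsle ht10 (by norm_num) (by norm_num) hs0 ht0 hPi_ge hmaster
            (by norm_num)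

lemma pow2q_inj {q A B F G : ℕ} (hq : q.Prime) (hq2 : q ≠ 2)
    (h : 2 ^ A * q ^ B = 2 ^ F * q ^ G) : A = F ∧ B = G := by
  have h2 := congrArg (fun n => n.factorization 2) h
  have hqq := congrArg (fun n => n.factorization q) h
  have e1 : ∀ k : ℕ, ((2:ℕ) ^ k).factorization = Finsupp.single 2 k :=
    fun k => Nat.Prime.factorization_pow Nat.prime_two
  have e2 : ∀ k : ℕ, (q ^ k).factorization = Finsupp.single q k :=
    fun k => Nat.Prime.factorization_pow hq
  simp only [Nat.factorization_mul (pow_ne_zero _ (two_ne_zero)) (pow_ne_zero _ hq.pos.ne'),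
    e1, e2, Finsupp.add_apply, Finsupp.single_apply] at h2 hqq
  simp [hq2, Ne.symm hq2] at h2 hqq
  omega

/-- Let `N ≠ 9, 165` be an odd USP with `σ*(N) = 2^f₁ * q^f₂`, `q` an odd prime, `q ≠ 3`,
and `f₁, f₂` positive. Then `q ≤ 13`; furthermore, if `f₂ ≥ 2`, then `q = 5` or `q = 7`. -/
theorem usp_q_le_thirteen (N : ℕ) (hpos : 0 < N) (hodd : Odd N)
    (husp : usigma (usigma N) = 2 * N) (h9 : N ≠ 9) (h165 : N ≠ 165)
    (q f₁ f₂ : ℕ) (hq : q.Prime) (hqodd : Odd q) (hq3 : q ≠ 3)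
    (hf₁ : 0 < f₁) (hf₂ : 0 < f₂) (hsig : usigma N = 2 ^ f₁ * q ^ f₂) :
    q ≤ 13 ∧ (2 ≤ f₂ → q = 5 ∨ q = 7) := by
  have hq2 : q ≠ 2 := by
    rintro rfl
    exact (Nat.not_odd_iff_even.mpr (even_two)) hqodd
  have hcop2q : Nat.Coprime (2 ^ f₁) (q ^ f₂) :=
    Nat.Coprime.pow _ _ ((Nat.coprime_primes Nat.prime_two hq).mpr (fun h => hq2 h.symm))
  -- the fundamental equation
  have husp2 : (2 ^ f₁ + 1) * (q ^ f₂ + 1) = 2 * N := by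
    rw [← husp, hsig, usigma_mul' hcop2q,
      usigma_prime_pow Nat.prime_two hf₁, usigma_prime_pow hq hf₂]
  -- component structure
  set P : Finset ℕ := N.primeFactors with hPdef
  have hNprod : ∏ p ∈ P, p ^ N.factorization p = N := by
    rw [hPdef, ← Nat.support_factorization]
    exact Nat.factorization_prod_pow_eq_self hpos.ne'
  have husigN : ∏ p ∈ P, (p ^ N.factorization p + 1) = 2 ^ f₁ * q ^ f₂ := by
    rw [← hsig, usigma_prod_formula hpos.ne']
  have hex : ∀ p ∈ P, ∃ aa bb : ℕ, p ^ N.factorization p + 1 = 2 ^ aa * q ^ bb := by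
    intro p hp
    have hdvd : (p ^ N.factorization p + 1) ∣ 2 ^ f₁ * q ^ f₂ := by
      rw [← husigN]
      exact Finset.dvd_prod_of_mem _ hp
    set d := p ^ N.factorization p + 1
    have hgcd : Nat.gcd d (2 ^ f₁) * Nat.gcd d (q ^ f₂) = d :=
      (Nat.gcd_mul_gcd_eq_iff_dvd_mul_of_coprime hcop2q).mpr hdvd
    obtain ⟨aa, _, ha⟩ := (Nat.dvd_prime_pow Nat.prime_two).mp (Nat.gcd_dvd_right d (2 ^ f₁))
    obtain ⟨bb, _, hb⟩ := (Nat.dvd_prime_pow hq).mp (Nat.gcd_dvd_right d (q ^ f₂))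
    exact ⟨aa, bb, by rw [← hgcd, ha, hb]⟩
  choose! a b hab using hex
  -- facts about p ∈ P
  have hprime : ∀ p ∈ P, p.Prime := fun p hp => Nat.prime_of_mem_primeFactors hp
  have hepos : ∀ p ∈ P, 0 < N.factorization p := fun p hp =>
    Nat.Prime.factorization_pos_of_dvd (hprime p hp) hpos.ne' (Nat.dvd_of_mem_primeFactors hp)
  have hpodd : ∀ p ∈ P, Odd p := by
    intro p hp
    rcases (hprime p hp).eq_two_or_odd' with rfl | h
    · exfalso
      exact (Nat.not_odd_iff_even.mpr (even_iff_two_dvd.mpr (Nat.dvd_of_mem_primeFactors hp)))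
        hodd
    · exact h
  have hCodd : ∀ p ∈ P, Odd (p ^ N.factorization p) := fun p hp => (hpodd p hp).pow
  have ha1 : ∀ p ∈ P, 1 ≤ a p := by
    intro p hp
    by_contra h0
    push_neg at h0
    have ha0 : a p = 0 := by omega
    have h := hab p hp
    rw [ha0, pow_zero, one_mul] at h
    have hodd' := hCodd p hp
    have hoddq : Odd (q ^ b p) := hqodd.pow
    rw [← h] at hoddq
    rcases hodd' with ⟨k, hk⟩
    rcases hoddq with ⟨l, hl⟩
    omega
  have hppw : ∀ p ∈ P, IsPrimePow (2 ^ a p * q ^ b p - 1) := by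
    intro p hp
    have h := hab p hp
    have heqpe : 2 ^ a p * q ^ b p - 1 = p ^ N.factorization p := by omega
    rw [heqpe]
    exact ⟨p, N.factorization p, (hprime p hp).prime, hepos p hp, rfl⟩
  have hinj : ∀ p ∈ P, ∀ p' ∈ P, a p = a p' → b p = b p' → p = p' := by
    intro p hp p' hp' hA hB
    have h := hab p hp
    have h' := hab p' hp'
    rw [hA, hB] at h
    have hpe : p ^ N.factorization p = p' ^ N.factorization p' := by omega
    have hpd : p ∣ p' ^ N.factorization p' := hpe ▸ dvd_pow_self p (hepos p hp).ne'
    exact (Nat.prime_dvd_prime_iff_eq (hprime p hp) (hprime p' hp')).mp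
      ((hprime p hp).dvd_of_dvd_pow hpd)
  have hCprod : ∏ p ∈ P, (2 ^ a p * q ^ b p) = 2 ^ f₁ * q ^ f₂ := by
    rw [← husigN]
    exact Finset.prod_congr rfl fun p hp => (hab p hp).symm
  have hsab : (∑ p ∈ P, a p) = f₁ ∧ (∑ p ∈ P, b p) = f₂ := by
    have hh := hCprod
    rw [Finset.prod_mul_distrib, Finset.prod_pow_eq_pow_sum, Finset.prod_pow_eq_pow_sum] at hh
    exact pow2q_inj hq hq2 hh
  have heqc : (2 ^ f₁ + 1) * (q ^ f₂ + 1) = 2 * ∏ p ∈ P, (2 ^ a p * q ^ b p - 1) := by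
    rw [husp2, ← hNprod]
    congr 1
    exact Finset.prod_congr rfl fun p hp => by have := hab p hp; omega
  have hmain : ¬ (11 ≤ q ∧ (17 ≤ q ∨ 2 ≤ f₂)) := by
    rintro ⟨hq11, hY⟩
    exact core q f₁ f₂ hq hq11 hf₁ hf₂ hY P a b ha1 hppw hinj hsab.1 hsab.2 heqc
  constructor
  · by_contra h13
    push_neg at h13
    have h17 : 17 ≤ q := by
      by_contra h17
      push_neg at h17
      interval_cases q <;> revert hq <;> norm_num
    exact hmain ⟨by omega, Or.inl h17⟩
  · intro hf22
    by_contra h57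
    push_neg at h57
    have hq11 : 11 ≤ q := by
      have h2le := hq.two_le
      by_contra hlt
      push_neg at hlt
      interval_cases q
      · exact hq2 rfl
      · exact hq3 rfl
      · revert hq; norm_num
      · exact h57.1 rfl
      · revert hq; norm_num
      · exact h57.2 rfl
      · revert hq; norm_num
      · revert hq; norm_num
      · revert hq; norm_num
    exact hmain ⟨hq11, Or.inr hf22⟩
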